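/- Let n ≥ 1 and 0 ≤ k ≤ n−1. Let λ₁, λ₁' be duplicate-free lists whose set of entries is exactly {1, …, k}, and let λ₂, λ₂' be duplicate-free lists whose set of entries is exactly {k+2, …, n}. Then λ₁ ++ λ₂ ++ [k+1] is isotopy equivalent to λ₁' ++ λ₂' ++ [k+1] if and only if λ₁ is isotopy equivalent to λ₁' and λ₂ is isotopy equivalent to λ₂'. -/

import Mathlib

/-- An elementary move on a duplicate-free list of natural numbers: transpose two
adjacent entries `x = i_j` and `y = i_{j+1}` for which there exists a later entry
`p = i_q` (with `q > j+1`) such that `x < p < y` or `x > p > y`. -/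
def ElemMove (l l' : List ℕ) : Prop :=
  l.Nodup ∧ ∃ (a b : List ℕ) (x y : ℕ),
    l = a ++ x :: y :: b ∧ l' = a ++ y :: x :: b ∧
    ∃ p ∈ b, (x < p ∧ p < y) ∨ (y < p ∧ p < x)

/-- Isotopy equivalence: the smallest equivalence relation generated by elementary moves. -/
def IsoEquiv : List ℕ → List ℕ → Prop := Relation.EqvGen ElemMove

/-- Two normal forms `λ₁ ++ λ₂ ++ [k+1]` and `λ₁' ++ λ₂' ++ [k+1]` (with `λ₁, λ₁'`
permutations of `{1, …, k}` and `λ₂, λ₂'` permutations of `{k+2, …, n}`) are isotopy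
equivalent if and only if `λ₁` is isotopy equivalent to `λ₁'` and `λ₂` is isotopy
equivalent to `λ₂'`. -/
lemma ElemMove.perm {l l' : List ℕ} (h : ElemMove l l') : l.Perm l' := by
  obtain ⟨-, a, b, x, y, rfl, rfl, -⟩ := h
  exact (List.perm_append_left_iff a).2 (List.Perm.swap y x b)

lemma IsoEquiv.perm {l l' : List ℕ} (h : IsoEquiv l l') : l.Perm l' := by
  induction h with
  | rel _ _ h => exact h.perm
  | refl => exact List.Perm.refl _
  | symm _ _ _ ih => exact ih.symm
  | trans _ _ _ _ _ ih1 ih2 => exact ih1.trans ih2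

lemma ElemMove.lift {l l' : List ℕ} (a s : List ℕ) (h : ElemMove l l')
    (hnd : (a ++ l ++ s).Nodup) : ElemMove (a ++ l ++ s) (a ++ l' ++ s) := by
  obtain ⟨-, c, b, x, y, rfl, rfl, p, hp, hor⟩ := h
  refine ⟨hnd, a ++ c, b ++ s, x, y, by simp, by simp, p, by simp [hp], hor⟩

lemma IsoEquiv.lift {l l' : List ℕ} (a s : List ℕ) (h : IsoEquiv l l')
    (hnd : (a ++ l ++ s).Nodup) : IsoEquiv (a ++ l ++ s) (a ++ l' ++ s) := by
  revert hnd
  induction h with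
  | rel _ _ h => exact fun hnd => Relation.EqvGen.rel _ _ (h.lift a s hnd)
  | refl => exact fun _ => Relation.EqvGen.refl _
  | symm u v h ih =>
      intro hnd
      have hnd' : (a ++ u ++ s).Nodup := by
        rw [List.append_assoc] at hnd ⊢
        exact ((((IsoEquiv.perm h).symm.append_right s).append_left a).nodup_iff).1 hnd
      exact Relation.EqvGen.symm _ _ (ih hnd')
  | trans u v w h1 h2 ih1 ih2 =>
      intro hnd
      have hnd' : (a ++ v ++ s).Nodup := by
        rw [List.append_assoc] at hnd ⊢
        exact ((((IsoEquiv.perm h1).append_right s).append_left a).nodup_iff).1 hnd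
      exact Relation.EqvGen.trans _ _ _ (ih1 hnd) (ih2 hnd')

lemma ElemMove.filter (p : ℕ → Bool)
    (hconv : ∀ x y q : ℕ, p x = true → p y = true →
      ((x < q ∧ q < y) ∨ (y < q ∧ q < x)) → p q = true)
    {l l' : List ℕ} (h : ElemMove l l') :
    IsoEquiv (l.filter p) (l'.filter p) := by
  obtain ⟨hnd, a, b, x, y, rfl, rfl, q, hq, hor⟩ := h
  by_cases hx : p x = true <;> by_cases hy : p y = true
  · refine Relation.EqvGen.rel _ _ ⟨List.Nodup.filter p hnd, a.filter p, b.filter p, x, y,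
      ?_, ?_, q, ?_, hor⟩
    · simp [List.filter_append, hx, hy]
    · simp [List.filter_append, hx, hy]
    · simp only [List.mem_filter]
      exact ⟨hq, hconv x y q hx hy hor⟩
  all_goals
    have : (x :: y :: b).filter p = (y :: x :: b).filter p := by
      simp [List.filter_cons, hx, hy]
    rw [List.filter_append, List.filter_append, this]
    exact Relation.EqvGen.refl _

lemma IsoEquiv.filter (p : ℕ → Bool)
    (hconv : ∀ x y q : ℕ, p x = true → p y = true →
      ((x < q ∧ q < y) ∨ (y < q ∧ q < x)) → p q = true)
    {l l' : List ℕ} (h : IsoEquiv l l') :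
    IsoEquiv (l.filter p) (l'.filter p) := by
  induction h with
  | rel _ _ h => exact h.filter p hconv
  | refl => exact Relation.EqvGen.refl _
  | symm _ _ _ ih => exact Relation.EqvGen.symm _ _ ih
  | trans _ _ _ _ _ ih1 ih2 => exact Relation.EqvGen.trans _ _ _ ih1 ih2

theorem isoEquiv_normal_form_iff (n k : ℕ) (hn : 1 ≤ n) (hk : k ≤ n - 1)
    (lam₁ lam₁' lam₂ lam₂' : List ℕ)
    (h₁ : lam₁.Nodup) (h₁m : ∀ x, x ∈ lam₁ ↔ x ∈ Finset.Icc 1 k)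
    (h₁' : lam₁'.Nodup) (h₁'m : ∀ x, x ∈ lam₁' ↔ x ∈ Finset.Icc 1 k)
    (h₂ : lam₂.Nodup) (h₂m : ∀ x, x ∈ lam₂ ↔ x ∈ Finset.Icc (k + 2) n)
    (h₂' : lam₂'.Nodup) (h₂'m : ∀ x, x ∈ lam₂' ↔ x ∈ Finset.Icc (k + 2) n) :
    IsoEquiv (lam₁ ++ lam₂ ++ [k + 1]) (lam₁' ++ lam₂' ++ [k + 1]) ↔
      IsoEquiv lam₁ lam₁' ∧ IsoEquiv lam₂ lam₂' := by
  set flow : ℕ → Bool := fun x => decide (x ≤ k) with hflow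
  set fhigh : ℕ → Bool := fun x => decide (k + 2 ≤ x) with hfhigh
  have hconvlow : ∀ x y q : ℕ, flow x = true → flow y = true →
      ((x < q ∧ q < y) ∨ (y < q ∧ q < x)) → flow q = true := by
    intro x y q hx hy hor
    simp only [hflow, decide_eq_true_eq] at *
    omega
  have hconvhigh : ∀ x y q : ℕ, fhigh x = true → fhigh y = true →
      ((x < q ∧ q < y) ∨ (y < q ∧ q < x)) → fhigh q = true := by
    intro x y q hx hy hor
    simp only [hfhigh, decide_eq_true_eq] at *
    omega
  have hflowcalc : ∀ (a b : List ℕ), (∀ x, x ∈ a ↔ x ∈ Finset.Icc 1 k) →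
      (∀ x, x ∈ b ↔ x ∈ Finset.Icc (k + 2) n) →
      (a ++ b ++ [k + 1]).filter flow = a := by
    intro a b hma hmb
    have h1 : a.filter flow = a := List.filter_eq_self.2 (fun x hx => by
      have := (hma x).1 hx; simp only [Finset.mem_Icc] at this
      simp only [hflow, decide_eq_true_eq]; omega)
    have h2 : b.filter flow = [] := List.filter_eq_nil_iff.2 (fun x hx => by
      have := (hmb x).1 hx; simp only [Finset.mem_Icc] at this
      simp only [hflow, decide_eq_true_eq]; omega)
    rw [List.filter_append, List.filter_append, h1, h2]; simp [hflow]
  have hfhighcalc : ∀ (a b : List ℕ), (∀ x, x ∈ a ↔ x ∈ Finset.Icc 1 k) →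
      (∀ x, x ∈ b ↔ x ∈ Finset.Icc (k + 2) n) →
      (a ++ b ++ [k + 1]).filter fhigh = b := by
    intro a b hma hmb
    have h1 : a.filter fhigh = [] := List.filter_eq_nil_iff.2 (fun x hx => by
      have := (hma x).1 hx; simp only [Finset.mem_Icc] at this
      simp only [hfhigh, decide_eq_true_eq]; omega)
    have h2 : b.filter fhigh = b := List.filter_eq_self.2 (fun x hx => by
      have := (hmb x).1 hx; simp only [Finset.mem_Icc] at this
      simp only [hfhigh, decide_eq_true_eq]; omega)
    rw [List.filter_append, List.filter_append, h1, h2]; simp [hfhigh]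
  have key : ∀ (a b : List ℕ), a.Nodup → b.Nodup →
      (∀ x, x ∈ a ↔ x ∈ Finset.Icc 1 k) → (∀ x, x ∈ b ↔ x ∈ Finset.Icc (k + 2) n) →
      (a ++ b ++ [k + 1]).Nodup := by
    intro a b ha hb hma hmb
    refine List.nodup_append.2 ⟨List.nodup_append.2 ⟨ha, hb, ?_⟩,
      List.nodup_singleton _, ?_⟩
    · intro x hxa _ hxb rfl
      have h1 := (hma x).1 hxa
      have h2 := (hmb x).1 hxb
      simp only [Finset.mem_Icc] at h1 h2
      omega
    · intro x hx _ hx1 rfl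
      simp only [List.mem_singleton] at hx1
      subst hx1
      rcases List.mem_append.1 hx with h | h
      · have := (hma _).1 h; simp only [Finset.mem_Icc] at this; omega
      · have := (hmb _).1 h; simp only [Finset.mem_Icc] at this; omega
  constructor
  · intro h
    constructor
    · have := h.filter flow hconvlow
      rwa [hflowcalc lam₁ lam₂ h₁m h₂m, hflowcalc lam₁' lam₂' h₁'m h₂'m] at this
    · have := h.filter fhigh hconvhigh
      rwa [hfhighcalc lam₁ lam₂ h₁m h₂m, hfhighcalc lam₁' lam₂' h₁'m h₂'m] at this
  · rintro ⟨e1, e2⟩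
    have step1 : IsoEquiv (lam₁ ++ lam₂ ++ [k + 1]) (lam₁' ++ lam₂ ++ [k + 1]) := by
      have := e1.lift [] (lam₂ ++ [k + 1]) (by
        simpa [List.append_assoc] using key lam₁ lam₂ h₁ h₂ h₁m h₂m)
      simpa [List.append_assoc] using this
    have step2 : IsoEquiv (lam₁' ++ lam₂ ++ [k + 1]) (lam₁' ++ lam₂' ++ [k + 1]) :=
      e2.lift lam₁' [k + 1] (key lam₁' lam₂ h₁' h₂ h₁'m h₂m)
    exact Relation.EqvGen.trans _ _ _ step1 step2
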